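/- Let G be a finite strongly connected digraph without loops and let u,v be distinct vertices with (u,v) ∈ E(G) and (v,u) ∈ E(G). Then {u,v} is NOT an edge of the strong resolving graph G_SR if and only if both of the following hold: (1) there exists y ≠ v with (y,u) ∈ E(G) and (y,v) ∉ E(G), or there exists x ≠ u with (v,x) ∈ E(G) and (u,x) ∉ E(G); and (2) there exists x ≠ u with (x,v) ∈ E(G) and (x,u) ∉ E(G), or there exists y ≠ v with (u,y) ∈ E(G) and (v,y) ∉ E(G). -/

import Mathlib

/-- There is a directed walk of length `n` from `u` to `v` in the digraph with
edge relation `E`. -/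
def DWalk {V : Type*} (E : V → V → Prop) (u v : V) (n : ℕ) : Prop :=
  ∃ f : Fin (n + 1) → V, f 0 = u ∧ f (Fin.last n) = v ∧
    ∀ i : Fin n, E (f i.castSucc) (f i.succ)

/-- The length of a shortest directed path from `u` to `v`. -/
noncomputable def ddist {V : Type*} (E : V → V → Prop) (u v : V) : ℕ :=
  sInf {n | DWalk E u v n}

/-- The digraph with edge relation `E` is strongly connected. -/
def StronglyConnected {V : Type*} (E : V → V → Prop) : Prop :=
  ∀ u v : V, ∃ n : ℕ, DWalk E u v n

/-- `u` is maximally distant to `v` (u MDT v): no in-neighbour of `u` is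
farther from `v` than `u` is. -/
def MDT {V : Type*} (E : V → V → Prop) (u v : V) : Prop :=
  ∀ u', E u' u → ddist E u' v ≤ ddist E u v

/-- `v` is maximally distant from `u` (v MDF u): no out-neighbour of `v` is
farther from `u` than `v` is. -/
def MDF {V : Type*} (E : V → V → Prop) (v u : V) : Prop :=
  ∀ v', E v v' → ddist E u v' ≤ ddist E u v

/-- `u` is mutually maximally distant to `v` (u MMDT v). -/
def MMDT {V : Type*} (E : V → V → Prop) (u v : V) : Prop :=
  MDT E u v ∧ MDF E v u

/-- The strong resolving graph of the digraph with edge relation `E`: an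
undirected graph with an edge `{u,v}` iff `u ≠ v` and `u MMDT v` or `v MMDT u`. -/
def dsrGraph {V : Type*} (E : V → V → Prop) : SimpleGraph V where
  Adj u v := u ≠ v ∧ (MMDT E u v ∨ MMDT E v u)
  symm := by
    constructor
    rintro u v ⟨h1, h2⟩
    exact ⟨h1.symm, h2.symm⟩
  loopless := by
    constructor
    rintro u ⟨h, -⟩
    exact h rfl

/-- `w` strongly resolves `u` to `v`: there is a shortest directed path from
`w` to `v` containing `u` or a shortest directed path from `u` to `w`
containing `v`. -/
def DStronglyResolves {V : Type*} (E : V → V → Prop) (w u v : V) : Prop :=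
  ddist E w v = ddist E w u + ddist E u v ∨
  ddist E u w = ddist E u v + ddist E v w

/-- `R` is a strong resolving set for the digraph with edge relation `E`. -/
def IsDStrongResolvingSet {V : Type*} (E : V → V → Prop) (R : Set V) : Prop :=
  ∀ u v : V, u ≠ v → ∃ w ∈ R, DStronglyResolves E w u v

/-- The strong metric dimension of the digraph with edge relation `E`. -/
noncomputable def dsmd {V : Type*} [Fintype V] (E : V → V → Prop) : ℕ :=
  sInf {n | ∃ R : Finset V, IsDStrongResolvingSet E ↑R ∧ R.card = n}

/-- `C` is a vertex cover of `H`. -/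
def IsVertexCover {V : Type*} (H : SimpleGraph V) (C : Set V) : Prop :=
  ∀ a b : V, H.Adj a b → a ∈ C ∨ b ∈ C

/-- The minimum size of a vertex cover of `H`. -/
noncomputable def tau {V : Type*} [Fintype V] (H : SimpleGraph V) : ℕ :=
  sInf {n | ∃ C : Finset V, IsVertexCover H ↑C ∧ C.card = n}

/-- The join of two digraphs on disjoint vertex sets: keep all edges and add
all edges in both directions between the two graphs. -/
def joinE {V1 V2 : Type*} (E1 : V1 → V1 → Prop) (E2 : V2 → V2 → Prop) :
    V1 ⊕ V2 → V1 ⊕ V2 → Prop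
  | Sum.inl a, Sum.inl b => E1 a b
  | Sum.inr a, Sum.inr b => E2 a b
  | Sum.inl _, Sum.inr _ => True
  | Sum.inr _, Sum.inl _ => True

/-- A solitary vertex: some other vertex with no edge to or from it. -/
def SolitaryVertex {V : Type*} (E : V → V → Prop) (u : V) : Prop :=
  ∃ v : V, v ≠ u ∧ ¬ E u v ∧ ¬ E v u

/-- An in-vertex: some vertex with an edge to `u` but no edge back. -/
def InVertex {V : Type*} (E : V → V → Prop) (u : V) : Prop :=
  ∃ v : V, E v u ∧ ¬ E u v

/-- An out-vertex: some vertex with an edge from `u` but no edge back. -/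
def OutVertex {V : Type*} (E : V → V → Prop) (u : V) : Prop :=
  ∃ v : V, E u v ∧ ¬ E v u

/-- An in-out-vertex: both an in-vertex and an out-vertex. -/
def InOutVertex {V : Type*} (E : V → V → Prop) (u : V) : Prop :=
  InVertex E u ∧ OutVertex E u

lemma dwalk_zero' {V : Type*} {E : V → V → Prop} {u v : V} : DWalk E u v 0 ↔ u = v := by
  constructor
  · rintro ⟨f, h0, hl, -⟩
    rw [← h0, ← hl]
    rfl
  · rintro rfl
    exact ⟨fun _ => u, rfl, rfl, fun i => i.elim0⟩

lemma dwalk_one' {V : Type*} {E : V → V → Prop} {u v : V} : DWalk E u v 1 ↔ E u v := by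
  constructor
  · rintro ⟨f, h0, hl, hE⟩
    have h := hE 0
    rw [show ((0 : Fin 1).castSucc) = 0 from rfl, show ((0 : Fin 1).succ) = Fin.last 1 from rfl,
      h0, hl] at h
    exact h
  · intro h
    exact ⟨![u, v], rfl, rfl, fun i => by fin_cases i; simpa⟩

lemma ddist_le_one_iff' {V : Type*} {E : V → V → Prop} (hsc : StronglyConnected E)
    (a b : V) : ddist E a b ≤ 1 ↔ a = b ∨ E a b := by
  constructor
  · intro h
    have hm : DWalk E a b (ddist E a b) := Nat.sInf_mem (hsc a b)
    rcases Nat.le_one_iff_eq_zero_or_eq_one.mp h with h0 | h1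
    · exact Or.inl (dwalk_zero'.mp (h0 ▸ hm))
    · exact Or.inr (dwalk_one'.mp (h1 ▸ hm))
  · rintro (rfl | h)
    · exact le_trans (Nat.sInf_le (dwalk_zero'.mpr rfl)) (by norm_num)
    · exact Nat.sInf_le (dwalk_one'.mpr h)

lemma ddist_eq_one' {V : Type*} {E : V → V → Prop} (hsc : StronglyConnected E)
    {a b : V} (hne : a ≠ b) (hE : E a b) : ddist E a b = 1 := by
  have h1 : ddist E a b ≤ 1 := Nat.sInf_le (dwalk_one'.mpr hE)
  have h0 : ddist E a b ≠ 0 := by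
    intro h
    have hm : DWalk E a b (ddist E a b) := Nat.sInf_mem (hsc a b)
    exact hne (dwalk_zero'.mp (h ▸ hm))
  omega

lemma not_MDT_iff' {V : Type*} {E : V → V → Prop} (hsc : StronglyConnected E)
    {a b : V} (hd : ddist E a b = 1) :
    ¬ MDT E a b ↔ ∃ y, y ≠ b ∧ E y a ∧ ¬ E y b := by
  unfold MDT
  rw [hd]
  push_neg
  constructor
  · rintro ⟨y, hya, hgt⟩
    refine ⟨y, ?_, hya, ?_⟩
    · rintro rfl
      have := (ddist_le_one_iff' hsc y y).mpr (Or.inl rfl)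
      omega
    · intro hE
      have := (ddist_le_one_iff' hsc y b).mpr (Or.inr hE)
      omega
  · rintro ⟨y, hne, hya, hnE⟩
    refine ⟨y, hya, ?_⟩
    by_contra h
    push_neg at h
    rcases (ddist_le_one_iff' hsc y b).mp h with rfl | hE
    · exact hne rfl
    · exact hnE hE

lemma not_MDF_iff' {V : Type*} {E : V → V → Prop} (hsc : StronglyConnected E)
    {a b : V} (hd : ddist E a b = 1) :
    ¬ MDF E b a ↔ ∃ x, x ≠ a ∧ E b x ∧ ¬ E a x := by
  unfold MDF
  rw [hd]
  push_neg
  constructor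
  · rintro ⟨x, hbx, hgt⟩
    refine ⟨x, ?_, hbx, ?_⟩
    · rintro rfl
      have := (ddist_le_one_iff' hsc x x).mpr (Or.inl rfl)
      omega
    · intro hE
      have := (ddist_le_one_iff' hsc a x).mpr (Or.inr hE)
      omega
  · rintro ⟨x, hne, hbx, hnE⟩
    refine ⟨x, hbx, ?_⟩
    by_contra h
    push_neg at h
    rcases (ddist_le_one_iff' hsc a x).mp h with rfl | hE
    · exact hne rfl
    · exact hnE hE

/-- for a two-way edge `(u,v)` of a finite strongly connected
loopless digraph, `{u,v}` is NOT an edge of `G_SR` iff conditions (1) and (2)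
hold. -/
theorem twoWayEdge_not_adj_dsrGraph_iff {V : Type*} [Fintype V]
    (E : V → V → Prop) (hloop : ∀ x : V, ¬ E x x) (hsc : StronglyConnected E)
    (u v : V) (huv : u ≠ v) (huvE : E u v) (hvuE : E v u) :
    ¬ (dsrGraph E).Adj u v ↔
      ((∃ y : V, y ≠ v ∧ E y u ∧ ¬ E y v) ∨
        (∃ x : V, x ≠ u ∧ E v x ∧ ¬ E u x)) ∧
      ((∃ x : V, x ≠ u ∧ E x v ∧ ¬ E x u) ∨
        (∃ y : V, y ≠ v ∧ E u y ∧ ¬ E v y)) := by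
  have hd1 : ddist E u v = 1 := ddist_eq_one' hsc huv huvE
  have hd2 : ddist E v u = 1 := ddist_eq_one' hsc huv.symm hvuE
  have hadj : (dsrGraph E).Adj u v ↔ (MMDT E u v ∨ MMDT E v u) :=
    ⟨fun h => h.2, fun h => ⟨huv, h⟩⟩
  rw [hadj, not_or]
  have h1 : ¬ MMDT E u v ↔
      ((∃ y : V, y ≠ v ∧ E y u ∧ ¬ E y v) ∨ (∃ x : V, x ≠ u ∧ E v x ∧ ¬ E u x)) := by
    rw [MMDT, not_and_or, not_MDT_iff' hsc hd1, not_MDF_iff' hsc hd1]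
  have h2 : ¬ MMDT E v u ↔
      ((∃ x : V, x ≠ u ∧ E x v ∧ ¬ E x u) ∨ (∃ y : V, y ≠ v ∧ E u y ∧ ¬ E v y)) := by
    rw [MMDT, not_and_or, not_MDT_iff' hsc hd2, not_MDF_iff' hsc hd2]
  rw [h1, h2]
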